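/- Let g ≥ 3 be an odd integer and set n = g + 3 (so n is even). Let G be a finite group of order 8(g+3) generated by elements x, y, z with xyz = 1, where x has order 2, y has order 4, z has order n, and (xz³)² = 1. Then G is not a gpnf-group with respect to x, y, z: there exists an element of G that is not conjugate in G to any power of x, y, or z. -/

import Mathlib

section Aux

variable {G : Type*} [Group G]

/-- If a set `T` contains `1` and is closed under left multiplication by the
generators of a subgroup (and their inverses), then the generated subgroup is
contained in `T`. -/
lemma cover_lemma (S T : Set G) (h1 : (1 : G) ∈ T)
    (hmul : ∀ g ∈ S, ∀ t ∈ T, g * t ∈ T) (hinv : ∀ g ∈ S, ∀ t ∈ T, g⁻¹ * t ∈ T) :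
    (Subgroup.closure S : Set G) ⊆ T := by
  let U : Subgroup G :=
    { carrier := {g | (∀ t ∈ T, g * t ∈ T) ∧ (∀ t ∈ T, g⁻¹ * t ∈ T)}
      one_mem' := ⟨fun t ht => by simpa using ht, fun t ht => by simpa using ht⟩
      mul_mem' := by
        rintro a b ⟨ha1, ha2⟩ ⟨hb1, hb2⟩
        refine ⟨fun t ht => ?_, fun t ht => ?_⟩
        · rw [mul_assoc]; exact ha1 _ (hb1 t ht)
        · rw [mul_inv_rev, mul_assoc]; exact hb2 _ (ha2 t ht)
      inv_mem' := by
        rintro a ⟨ha1, ha2⟩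
        exact ⟨ha2, fun t ht => by simpa using ha1 t ht⟩ }
  have hle : Subgroup.closure S ≤ U :=
    (Subgroup.closure_le U).mpr (fun g hg => ⟨hmul g hg, hinv g hg⟩)
  intro g hg
  have := (hle hg).1 1 h1
  simpa using this

lemma mem_normalizer_of {H : Subgroup G} {g : G}
    (h1 : ∀ h ∈ H, g * h * g⁻¹ ∈ H) (h2 : ∀ h ∈ H, g⁻¹ * h * g ∈ H) :
    g ∈ Subgroup.normalizer (H : Set G) := by
  rw [Subgroup.mem_normalizer_iff]
  intro h
  constructor
  · exact fun hh => h1 h hh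
  · intro hh
    have := h2 _ hh
    have e : g⁻¹ * (g * h * g⁻¹) * g = h := by group
    rwa [e] at this

lemma conj_closure_mem (S : Set G) (g : G)
    (hS : ∀ s ∈ S, g * s * g⁻¹ ∈ Subgroup.closure S) :
    ∀ h ∈ Subgroup.closure S, g * h * g⁻¹ ∈ Subgroup.closure S := by
  intro h hh
  induction hh using Subgroup.closure_induction with
  | mem s hs => exact hS s hs
  | one => simpa using one_mem _
  | mul a b ha hb iha ihb =>
      have e : g * (a * b) * g⁻¹ = (g * a * g⁻¹) * (g * b * g⁻¹) := by group
      rw [e]; exact mul_mem iha ihb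
  | inv a ha iha =>
      have e : g * a⁻¹ * g⁻¹ = (g * a * g⁻¹)⁻¹ := by group
      rw [e]; exact inv_mem iha

/-- Reduction of an integer exponent modulo the order of an element. -/
lemma zpow_reduce (z : G) (n : ℕ) (hn : 0 < n) (h1 : z ^ n = 1) (b : ℤ) :
    ∃ c : ℕ, c < n ∧ ((n : ℤ) ∣ (b - (c : ℤ))) ∧ z ^ b = z ^ (c : ℤ) := by
  have h0 : 0 ≤ b % (n : ℤ) := Int.emod_nonneg b (by exact_mod_cast hn.ne')
  have hlt : b % (n : ℤ) < (n : ℤ) := Int.emod_lt_of_pos b (by exact_mod_cast hn)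
  have hc : (((b % (n : ℤ)).toNat : ℕ) : ℤ) = b % (n : ℤ) := Int.toNat_of_nonneg h0
  have hdm := Int.mul_ediv_add_emod b (n : ℤ)
  refine ⟨(b % (n : ℤ)).toNat, by omega, ?_, ?_⟩
  · exact ⟨b / (n : ℤ), by rw [hc]; linarith⟩
  have hz1 : z ^ ((n : ℕ) : ℤ) = 1 := by rw [zpow_natCast]; exact h1
  calc z ^ b = z ^ (b % (n : ℤ) + (n : ℤ) * (b / (n : ℤ))) := by rw [Int.emod_add_mul_ediv]
    _ = z ^ (b % (n : ℤ)) * (z ^ ((n : ℕ) : ℤ)) ^ (b / (n : ℤ)) := by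
        rw [zpow_add, zpow_mul]
    _ = z ^ (b % (n : ℤ)) := by rw [hz1, one_zpow, mul_one]
    _ = z ^ (((b % (n : ℤ)).toNat : ℕ) : ℤ) := by rw [Int.toNat_of_nonneg h0]

end Aux

set_option maxHeartbeats 8000000 in
/-- Let `g ≥ 3` be odd, `n = g + 3` (even), and let `G` be a finite group of
order `8(g+3)` generated by `x, y, z` with `xyz = 1`, where `x`, `y`, `z` have orders
`2`, `4`, `n` respectively and `(x z³)² = 1`. Then `G` is not a gpnf-group with respect to
`x, y, z`: some element of `G` is not conjugate to any power of `x`, `y` or `z`. -/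
theorem stmt_16 (g : ℕ) (hg : 3 ≤ g) (hodd : Odd g)
    {G : Type*} [Group G] [Fintype G] (hcard : Fintype.card G = 8 * (g + 3))
    (x y z : G)
    (hgen : Subgroup.closure ({x, y, z} : Set G) = ⊤)
    (hprod : x * y * z = 1)
    (hx : orderOf x = 2) (hy : orderOf y = 4) (hz : orderOf z = g + 3)
    (hrel : (x * z ^ 3) ^ 2 = 1) :
    ∃ w : G, (∀ k : ℕ, ¬ IsConj (x ^ k) w) ∧ (∀ k : ℕ, ¬ IsConj (y ^ k) w) ∧
      (∀ k : ℕ, ¬ IsConj (z ^ k) w) := by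
  -- basic power relations
  have hx2 : x * x = 1 := by
    have h := pow_orderOf_eq_one x; rw [hx, pow_two] at h; exact h
  have hxi : x⁻¹ = x := by
    rw [inv_eq_iff_mul_eq_one]; exact hx2
  have hy4 : y ^ (4 : ℕ) = 1 := by rw [← hy]; exact pow_orderOf_eq_one y
  have hzn : z ^ (g + 3 : ℕ) = 1 := by rw [← hz]; exact pow_orderOf_eq_one z
  have hy' : y = x * z⁻¹ := by
    have h : x⁻¹ * (x * y * z) * z⁻¹ = x⁻¹ * 1 * z⁻¹ := by rw [hprod]
    have e : x⁻¹ * (x * y * z) * z⁻¹ = y := by group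
    have e2 : x⁻¹ * 1 * z⁻¹ = x * z⁻¹ := by rw [hxi]; group
    rw [e, e2] at h; exact h
  have hyi : y⁻¹ = z * x := by
    rw [hy', mul_inv_rev, inv_inv, hxi]
  obtain ⟨u, hu_def⟩ : ∃ u : G, u = x * z * x := ⟨_, rfl⟩
  have hupow : ∀ k : ℤ, x * z ^ k * x = u ^ k := by
    intro k
    have h := map_zpow (MulAut.conj x) z k
    simp only [MulAut.conj_apply] at h
    rw [hxi] at h
    rw [hu_def]; exact h
  have hupow' : ∀ k : ℤ, x * u ^ k * x = z ^ k := by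
    intro k
    rw [← hupow k]
    calc x * (x * z ^ k * x) * x = (x * x) * z ^ k * (x * x) := by group
      _ = z ^ k := by rw [hx2]; group
  have hz2 : z ^ (2 : ℤ) = z * z := by
    rw [show (2 : ℤ) = 1 + 1 by norm_num, zpow_add, zpow_one]
  have hu3 : u * u * u = (z * z * z)⁻¹ := by
    have h2 := hrel
    rw [pow_two] at h2
    have h3 : (x * z ^ (3 : ℕ) * x) * z ^ (3 : ℕ) = 1 := by
      have e : (x * z ^ (3 : ℕ) * x) * z ^ (3 : ℕ) = (x * z ^ (3 : ℕ)) * (x * z ^ (3 : ℕ)) := by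
        group
      rw [e]; exact h2
    have h4 : x * z ^ (3 : ℕ) * x = (z ^ (3 : ℕ))⁻¹ := eq_inv_of_mul_eq_one_left h3
    have e3 : z ^ (3 : ℕ) = z * z * z := by rw [pow_succ, pow_two]
    rw [e3] at h4
    rw [← h4, hu_def]
    calc (x * z * x) * (x * z * x) * (x * z * x)
        = x * (z * (x * x) * z * (x * x) * z) * x := by group
      _ = x * (z * z * z) * x := by rw [hx2]; group
  have hzuzu : (z * u) * (z * u) = 1 := by
    have hzu : z * u = y⁻¹ * y⁻¹ := by rw [hyi, hu_def]; group
    rw [hzu]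
    have e : y⁻¹ * y⁻¹ * (y⁻¹ * y⁻¹) = (y ^ (4 : ℕ))⁻¹ := by group
    rw [e, hy4, inv_one]
  have huzu : u * z * u = z⁻¹ := by
    have h : z * (u * z * u) = 1 := by
      have e : z * (u * z * u) = (z * u) * (z * u) := by group
      rw [e]; exact hzuzu
    exact eq_inv_of_mul_eq_one_right h
  have hzuz : z * u * z = u⁻¹ := by
    have h : u * (z * u * z) = 1 := by
      have e : u * (z * u * z) = z⁻¹ * ((z * u) * (z * u)) * z := by group
      rw [e, hzuzu]; group
    exact eq_inv_of_mul_eq_one_right h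
  have hcz3 : ∀ q : ℤ, z ^ (3 * q) * u = u * z ^ (3 * q) := by
    have hC : Commute (z ^ (3 : ℤ)) u := by
      have h1 : z ^ (3 : ℤ) = (u * u * u)⁻¹ := by
        rw [show (3 : ℤ) = 1 + 1 + 1 by norm_num, zpow_add, zpow_add, zpow_one, hu3, inv_inv]
      rw [h1]
      show (u * u * u)⁻¹ * u = u * (u * u * u)⁻¹
      group
    intro q
    have h2 : Commute ((z ^ (3 : ℤ)) ^ q) u := hC.zpow_left q
    rw [← zpow_mul] at h2
    exact h2.eq
  have hu2 : u * u = z⁻¹ * z⁻¹ * u * z := by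
    have h1 : u * u = (u * u * u) * u⁻¹ := by group
    rw [h1, hu3, ← hzuz]
    group
  have humm : u⁻¹ * u⁻¹ = u * (z * z * z) := by
    have h1 : u⁻¹ * u⁻¹ = u * (u * u * u)⁻¹ := by group
    rw [h1, hu3, inv_inv]
  have huz2u : u * (z * z) * u = z⁻¹ * u * (z * z) := by
    have h1 : u * (z * z) * u = z⁻¹ * ((z * u * z) * (z * u * z)) * z⁻¹ := by group
    rw [h1, hzuz, humm]
    group
  -- the sandwich lemma
  have hsand : ∀ a : ℤ, (∃ j : ℤ, u * z ^ a * u = z ^ j ∧ (a - j) % 2 = 0) ∨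
      (∃ c d : ℤ, u * z ^ a * u = z ^ c * u * z ^ d ∧ (a + 1 - c - d) % 2 = 0) := by
    intro a
    obtain ⟨q, r, hqr, hr⟩ : ∃ q r : ℤ, a = 3 * q + r ∧ (r = 0 ∨ r = 1 ∨ r = 2) :=
      ⟨a / 3, a % 3, by omega, by omega⟩
    have hmove : u * z ^ a * u = z ^ (3 * q) * (u * z ^ r * u) := by
      calc u * z ^ a * u = u * (z ^ (3 * q) * z ^ r) * u := by
            rw [← zpow_add, ← hqr]
        _ = (u * z ^ (3 * q)) * z ^ r * u := by group
        _ = (z ^ (3 * q) * u) * z ^ r * u := by rw [← hcz3 q]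
        _ = z ^ (3 * q) * (u * z ^ r * u) := by group
    rcases hr with h | h | h
    · refine Or.inr ⟨3 * q + -2, 1, ?_, by omega⟩
      rw [hmove, h]
      have e : u * z ^ (0 : ℤ) * u = u * u := by group
      rw [e, hu2]
      group
    · refine Or.inl ⟨3 * q + -1, ?_, by omega⟩
      rw [hmove, h]
      have e : u * z ^ (1 : ℤ) * u = u * z * u := by group
      rw [e, huzu]
      group
    · refine Or.inr ⟨3 * q + -1, 2, ?_, by omega⟩
      rw [hmove, h, hz2, huz2u]
      group
  -- more commutation identities
  have hx_u : x * u * x = z := by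
    have h := hupow' 1
    simpa using h
  have hzx : z * x = x * u := by
    rw [hu_def]
    calc z * x = (x * x) * (z * x) := by rw [hx2]; group
      _ = x * (x * z * x) := by group
  have hzxi : z⁻¹ * x = x * u⁻¹ := by
    calc z⁻¹ * x = z⁻¹ * (x * u) * u⁻¹ := by group
      _ = z⁻¹ * (z * x) * u⁻¹ := by rw [hzx]
      _ = x * u⁻¹ := by group
  have hxzi : x * z⁻¹ * x = u⁻¹ := by
    have h := hupow (-1)
    simpa using h
  have hxui : x * u⁻¹ * x = z⁻¹ := by
    have h := hupow' (-1)
    simpa using h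
  have hy2 : y * y = u⁻¹ * z⁻¹ := by
    rw [hy']
    calc (x * z⁻¹) * (x * z⁻¹) = (x * z⁻¹ * x) * z⁻¹ := by group
      _ = u⁻¹ * z⁻¹ := by rw [hxzi]
  -- the first covering set
  set f1 : Fin (g + 3) ⊕ (Fin 3 × Fin (g + 3)) → G :=
    Sum.elim (fun b => z ^ ((b : ℕ) : ℤ))
      (fun p => z ^ ((p.1 : ℕ) : ℤ) * u * z ^ ((p.2 : ℕ) : ℤ)) with hf1
  set T1 : Set G := {t | (∃ b : ℤ, t = z ^ b) ∨ (∃ a b : ℤ, t = z ^ a * u * z ^ b)} with hT1def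
  have memA : ∀ b : ℤ, z ^ b ∈ T1 := fun b => Or.inl ⟨b, rfl⟩
  have memB : ∀ a b : ℤ, z ^ a * u * z ^ b ∈ T1 := fun a b => Or.inr ⟨a, b, rfl⟩
  have hT1range : T1 ⊆ Set.range f1 := by
    rintro t (⟨b, rfl⟩ | ⟨a, b, rfl⟩)
    · obtain ⟨c, hc1, -, hc3⟩ := zpow_reduce z (g + 3) (by omega) hzn b
      exact ⟨Sum.inl ⟨c, hc1⟩, by simp only [hf1, Sum.elim_inl]; exact hc3.symm⟩
    · obtain ⟨q, r, hqr, hr⟩ : ∃ q r : ℤ, a = 3 * q + r ∧ (r = 0 ∨ r = 1 ∨ r = 2) :=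
        ⟨a / 3, a % 3, by omega, by omega⟩
      have hstep : z ^ a * u * z ^ b = z ^ r * u * z ^ (3 * q + b) := by
        calc z ^ a * u * z ^ b = z ^ r * (z ^ (3 * q) * u) * z ^ b := by
              rw [hqr, zpow_add]; group
          _ = z ^ r * (u * z ^ (3 * q)) * z ^ b := by rw [hcz3 q]
          _ = z ^ r * u * z ^ (3 * q + b) := by rw [zpow_add]; group
      obtain ⟨c, hc1, -, hc3⟩ := zpow_reduce z (g + 3) (by omega) hzn (3 * q + b)
      refine ⟨Sum.inr (⟨r.toNat, by omega⟩, ⟨c, hc1⟩), ?_⟩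
      simp only [hf1, Sum.elim_inr]
      have hrr : ((r.toNat : ℕ) : ℤ) = r := Int.toNat_of_nonneg (by omega)
      rw [hstep, hc3]
      rw [show (((⟨r.toNat, by omega⟩ : Fin 3) : ℕ) : ℤ) = r from hrr]
  have clzT : ∀ t ∈ T1, z * t ∈ T1 ∧ z⁻¹ * t ∈ T1 := by
    rintro t (⟨b, rfl⟩ | ⟨a, b, rfl⟩)
    · constructor
      · have e : z * z ^ b = z ^ (b + 1) := by group
        rw [e]; exact memA _
      · have e : z⁻¹ * z ^ b = z ^ (b + -1) := by group
        rw [e]; exact memA _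
    · constructor
      · have e : z * (z ^ a * u * z ^ b) = z ^ (a + 1) * u * z ^ b := by group
        rw [e]; exact memB _ _
      · have e : z⁻¹ * (z ^ a * u * z ^ b) = z ^ (a + -1) * u * z ^ b := by group
        rw [e]; exact memB _ _
  have cluT : ∀ t ∈ T1, u * t ∈ T1 ∧ u⁻¹ * t ∈ T1 := by
    rintro t (⟨b, rfl⟩ | ⟨a, b, rfl⟩)
    · constructor
      · have e : u * z ^ b = z ^ (0 : ℤ) * u * z ^ b := by group
        rw [e]; exact memB _ _
      · have e : u⁻¹ * z ^ b = z ^ (1 : ℤ) * u * z ^ (b + 1) := by rw [← hzuz]; group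
        rw [e]; exact memB _ _
    · constructor
      · have e : u * (z ^ a * u * z ^ b) = (u * z ^ a * u) * z ^ b := by group
        rw [e]
        rcases hsand a with ⟨j, hj, -⟩ | ⟨c, d, hcd, -⟩
        · rw [hj]
          have e2 : z ^ j * z ^ b = z ^ (j + b) := by group
          rw [e2]; exact memA _
        · rw [hcd]
          have e2 : z ^ c * u * z ^ d * z ^ b = z ^ c * u * z ^ (d + b) := by group
          rw [e2]; exact memB _ _
      · have e : u⁻¹ * (z ^ a * u * z ^ b) = z * (u * z ^ (a + 1) * u) * z ^ b := by
          rw [← hzuz]; group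
        rw [e]
        rcases hsand (a + 1) with ⟨j, hj, -⟩ | ⟨c, d, hcd, -⟩
        · rw [hj]
          have e2 : z * z ^ j * z ^ b = z ^ (1 + j + b) := by group
          rw [e2]; exact memA _
        · rw [hcd]
          have e2 : z * (z ^ c * u * z ^ d) * z ^ b = z ^ (1 + c) * u * z ^ (d + b) := by group
          rw [e2]; exact memB _ _
  set H1 : Subgroup G := Subgroup.closure ({z, u} : Set G) with hH1def
  have hzH1 : z ∈ H1 := Subgroup.subset_closure (Set.mem_insert _ _)
  have huH1 : u ∈ H1 := Subgroup.subset_closure (by simp)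
  have honeT1 : (1 : G) ∈ T1 := Or.inl ⟨0, (zpow_zero z).symm⟩
  have hH1T1 : (H1 : Set G) ⊆ T1 := by
    refine cover_lemma _ _ honeT1 ?_ ?_
    · intro s hs t ht
      simp only [Set.mem_insert_iff, Set.mem_singleton_iff] at hs
      rcases hs with rfl | rfl
      · exact (clzT t ht).1
      · exact (cluT t ht).1
    · intro s hs t ht
      simp only [Set.mem_insert_iff, Set.mem_singleton_iff] at hs
      rcases hs with rfl | rfl
      · exact (clzT t ht).2
      · exact (cluT t ht).2
  have hxH1 : x ∉ H1 := by
    intro hxm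
    have hym : y ∈ H1 := by rw [hy']; exact mul_mem hxm (inv_mem hzH1)
    have htop : H1 = ⊤ := by
      rw [eq_top_iff, ← hgen, Subgroup.closure_le]
      intro w hw
      simp only [Set.mem_insert_iff, Set.mem_singleton_iff] at hw
      rcases hw with rfl | rfl | rfl
      · exact hxm
      · exact hym
      · exact hzH1
    have hsurj : Function.Surjective f1 := fun w =>
      hT1range (hH1T1 (by rw [htop]; exact Subgroup.mem_top w))
    have hle := Fintype.card_le_of_surjective f1 hsurj
    rw [hcard] at hle
    simp only [Fintype.card_sum, Fintype.card_prod, Fintype.card_fin] at hle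
    omega
  have hconjxH1 : ∀ h ∈ H1, x * h * x⁻¹ ∈ H1 := by
    refine conj_closure_mem _ _ ?_
    intro s hs
    simp only [Set.mem_insert_iff, Set.mem_singleton_iff] at hs
    rcases hs with h | h
    · rw [h]
      have e : x * z * x⁻¹ = u := by rw [hxi, hu_def]
      rw [e]; exact huH1
    · rw [h]
      have e : x * u * x⁻¹ = z := by rw [hxi]; exact hx_u
      rw [e]; exact hzH1
  have hxnormH1 : x ∈ Subgroup.normalizer (H1 : Set G) := by
    refine mem_normalizer_of hconjxH1 ?_
    intro h hh
    rw [hxi]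
    have := hconjxH1 h hh
    rwa [hxi] at this
  have hznormH1 : z ∈ Subgroup.normalizer (H1 : Set G) := Subgroup.le_normalizer hzH1
  have hH1norm : H1.Normal := by
    rw [← Subgroup.normalizer_eq_top_iff, eq_top_iff, ← hgen, Subgroup.closure_le]
    intro w hw
    simp only [Set.mem_insert_iff, Set.mem_singleton_iff] at hw
    rcases hw with rfl | rfl | rfl
    · exact hxnormH1
    · rw [hy']; exact mul_mem hxnormH1 (inv_mem hznormH1)
    · exact hznormH1
  have hy2H1 : y * y ∈ H1 := by
    rw [hy2]; exact mul_mem (inv_mem huH1) (inv_mem hzH1)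
  have hwH1 : x * (y * y) ∉ H1 := by
    intro hw
    refine hxH1 ?_
    have e : x = (x * (y * y)) * (y * y)⁻¹ := by group
    rw [e]
    exact mul_mem hw (inv_mem hy2H1)
  -- second covering set, for the subgroup containing y
  obtain ⟨m, hm⟩ : ∃ m : ℕ, g + 3 = 2 * m := by
    obtain ⟨j, hj⟩ := hodd
    exact ⟨j + 2, by omega⟩
  set f2 : ((Fin m ⊕ Fin 3 × Fin m) ⊕ (Fin m ⊕ Fin 3 × Fin m)) → G :=
    Sum.elim
      (Sum.elim (fun b => z ^ ((2 * (b : ℕ) : ℕ) : ℤ))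
        (fun p => z ^ ((p.1 : ℕ) : ℤ) * u *
          z ^ (((2 * (p.2 : ℕ) : ℕ) : ℤ) + (((p.1 : ℕ) : ℤ) + 1) % 2)))
      (Sum.elim (fun b => x * z ^ ((2 * (b : ℕ) + 1 : ℕ) : ℤ))
        (fun p => x * (z ^ ((p.1 : ℕ) : ℤ) * u *
          z ^ (((2 * (p.2 : ℕ) : ℕ) : ℤ) + ((p.1 : ℕ) : ℤ) % 2)))) with hf2
  set S2 : Set G := {t | (∃ b : ℤ, b % 2 = 0 ∧ t = z ^ b) ∨
      (∃ a b : ℤ, (a + b) % 2 = 1 ∧ t = z ^ a * u * z ^ b) ∨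
      (∃ b : ℤ, b % 2 = 1 ∧ t = x * z ^ b) ∨
      (∃ a b : ℤ, (a + b) % 2 = 0 ∧ t = x * (z ^ a * u * z ^ b))} with hS2def
  have memS1 : ∀ b : ℤ, b % 2 = 0 → z ^ b ∈ S2 := fun b h => Or.inl ⟨b, h, rfl⟩
  have memS2 : ∀ a b : ℤ, (a + b) % 2 = 1 → z ^ a * u * z ^ b ∈ S2 :=
    fun a b h => Or.inr (Or.inl ⟨a, b, h, rfl⟩)
  have memS3 : ∀ b : ℤ, b % 2 = 1 → x * z ^ b ∈ S2 :=
    fun b h => Or.inr (Or.inr (Or.inl ⟨b, h, rfl⟩))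
  have memS4 : ∀ a b : ℤ, (a + b) % 2 = 0 → x * (z ^ a * u * z ^ b) ∈ S2 :=
    fun a b h => Or.inr (Or.inr (Or.inr ⟨a, b, h, rfl⟩))
  -- a helper for reducing the middle exponent modulo 3
  have hredB : ∀ a b : ℤ, ∃ r c : ℤ, 0 ≤ r ∧ r < 3 ∧ 0 ≤ c ∧ c < ((g + 3 : ℕ) : ℤ) ∧
      (r + c - a - b) % 2 = 0 ∧ z ^ a * u * z ^ b = z ^ r * u * z ^ c := by
    intro a b
    obtain ⟨q, r, hqr, hr⟩ : ∃ q r : ℤ, a = 3 * q + r ∧ (0 ≤ r ∧ r < 3) :=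
      ⟨a / 3, a % 3, by omega, by omega⟩
    have hstep : z ^ a * u * z ^ b = z ^ r * u * z ^ (3 * q + b) := by
      calc z ^ a * u * z ^ b = z ^ r * (z ^ (3 * q) * u) * z ^ b := by
            rw [hqr, zpow_add]; group
        _ = z ^ r * (u * z ^ (3 * q)) * z ^ b := by rw [hcz3 q]
        _ = z ^ r * u * z ^ (3 * q + b) := by rw [zpow_add]; group
    obtain ⟨c, hc1, hc2, hc3⟩ := zpow_reduce z (g + 3) (by omega) hzn (3 * q + b)
    have hdvd2 : (2 : ℤ) ∣ (3 * q + b - (c : ℤ)) :=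
      dvd_trans ⟨(m : ℤ), by push_cast; omega⟩ hc2
    refine ⟨r, (c : ℤ), by omega, by omega, by omega, by exact_mod_cast hc1, by omega, ?_⟩
    rw [hstep, hc3]
  have hS2range : S2 ⊆ Set.range f2 := by
    rintro t (⟨b, hb, rfl⟩ | ⟨a, b, hab, rfl⟩ | ⟨b, hb, rfl⟩ | ⟨a, b, hab, rfl⟩)
    · obtain ⟨c, hc1, hc2, hc3⟩ := zpow_reduce z (g + 3) (by omega) hzn b
      have hdvd2 : (2 : ℤ) ∣ (b - (c : ℤ)) := dvd_trans ⟨(m : ℤ), by push_cast; omega⟩ hc2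
      have hceven : c % 2 = 0 := by omega
      refine ⟨Sum.inl (Sum.inl ⟨c / 2, by omega⟩), ?_⟩
      simp only [hf2, Sum.elim_inl, Fin.val_mk]
      rw [hc3]
      have e1 : ((2 * (c / 2) : ℕ) : ℤ) = (c : ℤ) := by omega
      rw [e1]
    · obtain ⟨r, c, hr0, hr3, hc0, hcn, hpar, heq⟩ := hredB a b
      refine ⟨Sum.inl (Sum.inr (⟨r.toNat, by omega⟩, ⟨c.toNat / 2, by omega⟩)), ?_⟩
      simp only [hf2, Sum.elim_inl, Sum.elim_inr, Fin.val_mk]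
      rw [heq]
      have e1 : ((r.toNat : ℕ) : ℤ) = r := by omega
      rw [e1]
      have e2 : ((2 * (c.toNat / 2) : ℕ) : ℤ) + (r + 1) % 2 = c := by omega
      rw [e2]
    · obtain ⟨c, hc1, hc2, hc3⟩ := zpow_reduce z (g + 3) (by omega) hzn b
      have hdvd2 : (2 : ℤ) ∣ (b - (c : ℤ)) := dvd_trans ⟨(m : ℤ), by push_cast; omega⟩ hc2
      have hcodd : c % 2 = 1 := by omega
      refine ⟨Sum.inr (Sum.inl ⟨c / 2, by omega⟩), ?_⟩
      simp only [hf2, Sum.elim_inr, Sum.elim_inl, Fin.val_mk]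
      rw [hc3]
      have e1 : ((2 * (c / 2) + 1 : ℕ) : ℤ) = (c : ℤ) := by omega
      rw [e1]
    · obtain ⟨r, c, hr0, hr3, hc0, hcn, hpar, heq⟩ := hredB a b
      refine ⟨Sum.inr (Sum.inr (⟨r.toNat, by omega⟩, ⟨c.toNat / 2, by omega⟩)), ?_⟩
      simp only [hf2, Sum.elim_inr, Fin.val_mk]
      rw [heq]
      have e1 : ((r.toNat : ℕ) : ℤ) = r := by omega
      rw [e1]
      have e2 : ((2 * (c.toNat / 2) : ℕ) : ℤ) + r % 2 = c := by omega
      rw [e2]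
  -- closure of S2 under left multiplication by y and (z*z)
  have clyS : ∀ t ∈ S2, y * t ∈ S2 ∧ y⁻¹ * t ∈ S2 := by
    rintro t (⟨b, hb, rfl⟩ | ⟨a, b, hab, rfl⟩ | ⟨b, hb, rfl⟩ | ⟨a, b, hab, rfl⟩)
    · constructor
      · have e : y * z ^ b = x * z ^ (b + -1) := by rw [hy']; group
        rw [e]; exact memS3 _ (by omega)
      · have e : y⁻¹ * z ^ b = x * (z ^ (0 : ℤ) * u * z ^ b) := by
          rw [hyi, hzx]; group
        rw [e]; exact memS4 _ _ (by omega)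
    · constructor
      · have e : y * (z ^ a * u * z ^ b) = x * (z ^ (a + -1) * u * z ^ b) := by
          rw [hy']; group
        rw [e]; exact memS4 _ _ (by omega)
      · have e : y⁻¹ * (z ^ a * u * z ^ b) = x * (u * z ^ a * u) * z ^ b := by
          rw [hyi, hzx]; group
        rw [e]
        rcases hsand a with ⟨j, hj, hp⟩ | ⟨c, d, hcd, hp⟩
        · rw [hj]
          have e2 : x * z ^ j * z ^ b = x * z ^ (j + b) := by group
          rw [e2]; exact memS3 _ (by omega)
        · rw [hcd]
          have e2 : x * (z ^ c * u * z ^ d) * z ^ b = x * (z ^ c * u * z ^ (d + b)) := by group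
          rw [e2]; exact memS4 _ _ (by omega)
    · constructor
      · have e1 : y * (x * z ^ b) = (x * z⁻¹ * x) * z ^ b := by rw [hy']; group
        rw [e1, hxzi, ← hzuz]
        have e2 : (z * u * z) * z ^ b = z ^ (1 : ℤ) * u * z ^ (b + 1) := by group
        rw [e2]; exact memS2 _ _ (by omega)
      · have e1 : y⁻¹ * (x * z ^ b) = z * (x * x) * z ^ b := by rw [hyi]; group
        rw [e1, hx2]
        have e2 : z * 1 * z ^ b = z ^ (b + 1) := by group
        rw [e2]; exact memS1 _ (by omega)
    · constructor
      · have e1 : y * (x * (z ^ a * u * z ^ b)) = (x * z⁻¹ * x) * (z ^ a * u * z ^ b) := by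
          rw [hy']; group
        rw [e1, hxzi, ← hzuz]
        have e2 : (z * u * z) * (z ^ a * u * z ^ b) = z * (u * z ^ (a + 1) * u) * z ^ b := by
          group
        rw [e2]
        rcases hsand (a + 1) with ⟨j, hj, hp⟩ | ⟨c, d, hcd, hp⟩
        · rw [hj]
          have e3 : z * z ^ j * z ^ b = z ^ (1 + j + b) := by group
          rw [e3]; exact memS1 _ (by omega)
        · rw [hcd]
          have e3 : z * (z ^ c * u * z ^ d) * z ^ b = z ^ (1 + c) * u * z ^ (d + b) := by group
          rw [e3]; exact memS2 _ _ (by omega)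
      · have e1 : y⁻¹ * (x * (z ^ a * u * z ^ b)) = z * (x * x) * (z ^ a * u * z ^ b) := by
          rw [hyi]; group
        rw [e1, hx2]
        have e2 : z * 1 * (z ^ a * u * z ^ b) = z ^ (a + 1) * u * z ^ b := by group
        rw [e2]; exact memS2 _ _ (by omega)
  have clz2S : ∀ t ∈ S2, (z * z) * t ∈ S2 ∧ (z * z)⁻¹ * t ∈ S2 := by
    rintro t (⟨b, hb, rfl⟩ | ⟨a, b, hab, rfl⟩ | ⟨b, hb, rfl⟩ | ⟨a, b, hab, rfl⟩)
    · constructor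
      · have e : (z * z) * z ^ b = z ^ (b + 2) := by group
        rw [e]; exact memS1 _ (by omega)
      · have e : (z * z)⁻¹ * z ^ b = z ^ (b + -2) := by group
        rw [e]; exact memS1 _ (by omega)
    · constructor
      · have e : (z * z) * (z ^ a * u * z ^ b) = z ^ (a + 2) * u * z ^ b := by group
        rw [e]; exact memS2 _ _ (by omega)
      · have e : (z * z)⁻¹ * (z ^ a * u * z ^ b) = z ^ (a + -2) * u * z ^ b := by group
        rw [e]; exact memS2 _ _ (by omega)
    · constructor
      · have e1 : (z * z) * (x * z ^ b) = z * (z * x) * z ^ b := by group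
        rw [e1, hzx]
        have e2 : z * (x * u) * z ^ b = (z * x) * (u * z ^ b) := by group
        rw [e2, hzx]
        have e3 : (x * u) * (u * z ^ b) = x * (u * u) * z ^ b := by group
        rw [e3, hu2]
        have e4 : x * (z⁻¹ * z⁻¹ * u * z) * z ^ b = x * (z ^ (-2 : ℤ) * u * z ^ (b + 1)) := by
          group
        rw [e4]; exact memS4 _ _ (by omega)
      · have e1 : (z * z)⁻¹ * (x * z ^ b) = z⁻¹ * (z⁻¹ * x) * z ^ b := by group
        rw [e1, hzxi]
        have e2 : z⁻¹ * (x * u⁻¹) * z ^ b = (z⁻¹ * x) * (u⁻¹ * z ^ b) := by group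
        rw [e2, hzxi]
        have e3 : (x * u⁻¹) * (u⁻¹ * z ^ b) = x * (u⁻¹ * u⁻¹) * z ^ b := by group
        rw [e3, humm]
        have e4 : x * (u * (z * z * z)) * z ^ b = x * (z ^ (0 : ℤ) * u * z ^ (b + 3)) := by
          group
        rw [e4]; exact memS4 _ _ (by omega)
    · constructor
      · have e1 : (z * z) * (x * (z ^ a * u * z ^ b)) = z * (z * x) * (z ^ a * u * z ^ b) := by
          group
        rw [e1, hzx]
        have e2 : z * (x * u) * (z ^ a * u * z ^ b) = (z * x) * (u * (z ^ a * u * z ^ b)) := by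
          group
        rw [e2, hzx]
        have e3 : (x * u) * (u * (z ^ a * u * z ^ b)) = x * (u * u) * (z ^ a * u * z ^ b) := by
          group
        rw [e3, hu2]
        have e4 : x * (z⁻¹ * z⁻¹ * u * z) * (z ^ a * u * z ^ b) =
            x * (z⁻¹ * z⁻¹) * (u * z ^ (a + 1) * u) * z ^ b := by group
        rw [e4]
        rcases hsand (a + 1) with ⟨j, hj, hp⟩ | ⟨c, d, hcd, hp⟩
        · rw [hj]
          have e5 : x * (z⁻¹ * z⁻¹) * z ^ j * z ^ b = x * z ^ (j + b + -2) := by group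
          rw [e5]; exact memS3 _ (by omega)
        · rw [hcd]
          have e5 : x * (z⁻¹ * z⁻¹) * (z ^ c * u * z ^ d) * z ^ b =
              x * (z ^ (c + -2) * u * z ^ (d + b)) := by group
          rw [e5]; exact memS4 _ _ (by omega)
      · have e1 : (z * z)⁻¹ * (x * (z ^ a * u * z ^ b)) =
            z⁻¹ * (z⁻¹ * x) * (z ^ a * u * z ^ b) := by group
        rw [e1, hzxi]
        have e2 : z⁻¹ * (x * u⁻¹) * (z ^ a * u * z ^ b) =
            (z⁻¹ * x) * (u⁻¹ * (z ^ a * u * z ^ b)) := by group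
        rw [e2, hzxi]
        have e3 : (x * u⁻¹) * (u⁻¹ * (z ^ a * u * z ^ b)) =
            x * (u⁻¹ * u⁻¹) * (z ^ a * u * z ^ b) := by group
        rw [e3, humm]
        have e4 : x * (u * (z * z * z)) * (z ^ a * u * z ^ b) =
            x * (u * z ^ (a + 3) * u) * z ^ b := by group
        rw [e4]
        rcases hsand (a + 3) with ⟨j, hj, hp⟩ | ⟨c, d, hcd, hp⟩
        · rw [hj]
          have e5 : x * z ^ j * z ^ b = x * z ^ (j + b) := by group
          rw [e5]; exact memS3 _ (by omega)
        · rw [hcd]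
          have e5 : x * (z ^ c * u * z ^ d) * z ^ b = x * (z ^ c * u * z ^ (d + b)) := by group
          rw [e5]; exact memS4 _ _ (by omega)
  set K2 : Subgroup G := Subgroup.closure ({y, z * z} : Set G) with hK2def
  have hyK2 : y ∈ K2 := Subgroup.subset_closure (Set.mem_insert _ _)
  have hz2K2 : z * z ∈ K2 := Subgroup.subset_closure (by simp)
  have honeS2 : (1 : G) ∈ S2 := Or.inl ⟨0, by norm_num, (zpow_zero z).symm⟩
  have hK2S2 : (K2 : Set G) ⊆ S2 := by
    refine cover_lemma _ _ honeS2 ?_ ?_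
    · intro s hs t ht
      simp only [Set.mem_insert_iff, Set.mem_singleton_iff] at hs
      rcases hs with h | h
      · rw [h]; exact (clyS t ht).1
      · rw [h]; exact (clz2S t ht).1
    · intro s hs t ht
      simp only [Set.mem_insert_iff, Set.mem_singleton_iff] at hs
      rcases hs with h | h
      · rw [h]; exact (clyS t ht).2
      · rw [h]; exact (clz2S t ht).2
  have hwK2 : x * (y * y) ∉ K2 := by
    intro hw
    have hyyK2 : y * y ∈ K2 := mul_mem hyK2 hyK2
    have hxK2 : x ∈ K2 := by
      have e : x = (x * (y * y)) * (y * y)⁻¹ := by group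
      rw [e]; exact mul_mem hw (inv_mem hyyK2)
    have hzK2 : z ∈ K2 := by
      have e : z = (x * y)⁻¹ := eq_inv_of_mul_eq_one_right hprod
      rw [e]; exact inv_mem (mul_mem hxK2 hyK2)
    have htop : K2 = ⊤ := by
      rw [eq_top_iff, ← hgen, Subgroup.closure_le]
      intro w hw2
      simp only [Set.mem_insert_iff, Set.mem_singleton_iff] at hw2
      rcases hw2 with rfl | rfl | rfl
      · exact hxK2
      · exact hyK2
      · exact hzK2
    have hsurj : Function.Surjective f2 := fun w =>
      hS2range (hK2S2 (by rw [htop]; exact Subgroup.mem_top w))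
    have hle := Fintype.card_le_of_surjective f2 hsurj
    rw [hcard] at hle
    simp only [Fintype.card_sum, Fintype.card_prod, Fintype.card_fin] at hle
    omega
  -- normality of K2
  have hconjxK2 : ∀ h ∈ K2, x * h * x⁻¹ ∈ K2 := by
    refine conj_closure_mem _ _ ?_
    intro s hs
    simp only [Set.mem_insert_iff, Set.mem_singleton_iff] at hs
    rcases hs with h | h
    · rw [h]
      have e : x * y * x⁻¹ = (z * z)⁻¹ * y⁻¹ := by
        rw [hxi, hyi, hy']
        calc x * (x * z⁻¹) * x = (x * x) * (z⁻¹ * x) := by group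
          _ = z⁻¹ * x := by rw [hx2]; group
          _ = (z * z)⁻¹ * (z * x) := by group
      rw [e]; exact mul_mem (inv_mem hz2K2) (inv_mem hyK2)
    · rw [h]
      have e : x * (z * z) * x⁻¹ = y * (z * z) * y⁻¹ := by
        rw [hxi, hyi, hy']; group
      rw [e]; exact mul_mem (mul_mem hyK2 hz2K2) (inv_mem hyK2)
  have hxnormK2 : x ∈ Subgroup.normalizer (K2 : Set G) := by
    refine mem_normalizer_of hconjxK2 ?_
    intro h hh
    rw [hxi]
    have := hconjxK2 h hh
    rwa [hxi] at this
  have hznormK2 : z ∈ Subgroup.normalizer (K2 : Set G) := by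
    refine mem_normalizer_of ?_ ?_
    · refine conj_closure_mem _ _ ?_
      intro s hs
      simp only [Set.mem_insert_iff, Set.mem_singleton_iff] at hs
      rcases hs with h | h
      · rw [h]
        have e : z * y * z⁻¹ = y⁻¹ * (z * z)⁻¹ := by rw [hyi, hy']; group
        rw [e]; exact mul_mem (inv_mem hyK2) (inv_mem hz2K2)
      · rw [h]
        have e : z * (z * z) * z⁻¹ = z * z := by group
        rw [e]; exact hz2K2
    · have hc : ∀ h ∈ K2, z⁻¹ * h * (z⁻¹)⁻¹ ∈ K2 := by
        refine conj_closure_mem _ _ ?_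
        intro s hs
        simp only [Set.mem_insert_iff, Set.mem_singleton_iff] at hs
        rcases hs with h | h
        · rw [h]
          have e : z⁻¹ * y * (z⁻¹)⁻¹ = (z * z)⁻¹ * y⁻¹ := by rw [hyi, hy']; group
          rw [e]; exact mul_mem (inv_mem hz2K2) (inv_mem hyK2)
        · rw [h]
          have e : z⁻¹ * (z * z) * (z⁻¹)⁻¹ = z * z := by group
          rw [e]; exact hz2K2
      intro h hh
      have := hc h hh
      rwa [inv_inv] at this
  have hK2norm : K2.Normal := by
    rw [← Subgroup.normalizer_eq_top_iff, eq_top_iff, ← hgen, Subgroup.closure_le]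
    intro w hw
    simp only [Set.mem_insert_iff, Set.mem_singleton_iff] at hw
    rcases hw with rfl | rfl | rfl
    · exact hxnormK2
    · exact Subgroup.le_normalizer hyK2
    · exact hznormK2
  -- the witness `w = x*y²` squared is nontrivial
  have hx2' : x ^ (2 : ℕ) = 1 := by rw [pow_two]; exact hx2
  have hxy2x : x * (y * y) * x = z⁻¹ * u⁻¹ := by
    rw [hy2]
    calc x * (u⁻¹ * z⁻¹) * x = x * u⁻¹ * 1 * (z⁻¹ * x) := by group
      _ = x * u⁻¹ * (x * x) * (z⁻¹ * x) := by rw [hx2]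
      _ = (x * u⁻¹ * x) * (x * z⁻¹ * x) := by group
      _ = z⁻¹ * u⁻¹ := by rw [hxui, hxzi]
  have hww : (x * (y * y)) * (x * (y * y)) = z⁻¹ * u⁻¹ * (u⁻¹ * z⁻¹) := by
    calc (x * (y * y)) * (x * (y * y)) = (x * (y * y) * x) * (y * y) := by group
      _ = z⁻¹ * u⁻¹ * (u⁻¹ * z⁻¹) := by rw [hxy2x, hy2]
  have hwwne : (x * (y * y)) * (x * (y * y)) ≠ 1 := by
    intro h1
    have h2 : u⁻¹ * u⁻¹ = z * z := by
      have e : u⁻¹ * u⁻¹ = z * (z⁻¹ * u⁻¹ * (u⁻¹ * z⁻¹)) * z := by group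
      rw [e, ← hww, h1]
      group
    have h3 : u * (z * z * z) = z * z := by rw [← humm]; exact h2
    have hu_eq : u = z⁻¹ := by
      calc u = u * (z * z * z) * (z * z * z)⁻¹ := by group
        _ = (z * z) * (z * z * z)⁻¹ := by rw [h3]
        _ = z⁻¹ := by group
    have hzx' : z * x = x * z⁻¹ := by rw [hzx, hu_eq]
    have hzxi' : z⁻¹ * x = x * z := by
      have h := hzxi
      rw [hu_eq, inv_inv] at h
      exact h
    set TD : Set G := {t | (∃ b : ℤ, t = z ^ b) ∨ (∃ b : ℤ, t = x * z ^ b)} with hTDdef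
    set fD : Fin (g + 3) ⊕ Fin (g + 3) → G :=
      Sum.elim (fun b => z ^ ((b : ℕ) : ℤ)) (fun b => x * z ^ ((b : ℕ) : ℤ)) with hfD
    have memD1 : ∀ b : ℤ, z ^ b ∈ TD := fun b => Or.inl ⟨b, rfl⟩
    have memD2 : ∀ b : ℤ, x * z ^ b ∈ TD := fun b => Or.inr ⟨b, rfl⟩
    have hTDrange : TD ⊆ Set.range fD := by
      rintro t (⟨b, rfl⟩ | ⟨b, rfl⟩)
      · obtain ⟨c, hc1, hc2, hc3⟩ := zpow_reduce z (g + 3) (by omega) hzn b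
        exact ⟨Sum.inl ⟨c, hc1⟩, by simp only [hfD, Sum.elim_inl]; exact hc3.symm⟩
      · obtain ⟨c, hc1, hc2, hc3⟩ := zpow_reduce z (g + 3) (by omega) hzn b
        exact ⟨Sum.inr ⟨c, hc1⟩, by simp only [hfD, Sum.elim_inr]; rw [hc3]⟩
    have hclD : (Subgroup.closure ({x, z} : Set G) : Set G) ⊆ TD := by
      refine cover_lemma _ _ (Or.inl ⟨0, (zpow_zero z).symm⟩) ?_ ?_
      · intro s hs t ht
        simp only [Set.mem_insert_iff, Set.mem_singleton_iff] at hs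
        rcases hs with h | h
        · rw [h]
          rcases ht with ⟨b, rfl⟩ | ⟨b, rfl⟩
          · exact memD2 b
          · have e : x * (x * z ^ b) = (x * x) * z ^ b := by group
            rw [e, hx2, one_mul]; exact memD1 b
        · rw [h]
          rcases ht with ⟨b, rfl⟩ | ⟨b, rfl⟩
          · have e : z * z ^ b = z ^ (b + 1) := by group
            rw [e]; exact memD1 _
          · have e : z * (x * z ^ b) = (z * x) * z ^ b := by group
            rw [e, hzx']
            have e2 : x * z⁻¹ * z ^ b = x * z ^ (b + -1) := by group
            rw [e2]; exact memD2 _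
      · intro s hs t ht
        simp only [Set.mem_insert_iff, Set.mem_singleton_iff] at hs
        rcases hs with h | h
        · rw [h, hxi]
          rcases ht with ⟨b, rfl⟩ | ⟨b, rfl⟩
          · exact memD2 b
          · have e : x * (x * z ^ b) = (x * x) * z ^ b := by group
            rw [e, hx2, one_mul]; exact memD1 b
        · rw [h]
          rcases ht with ⟨b, rfl⟩ | ⟨b, rfl⟩
          · have e : z⁻¹ * z ^ b = z ^ (b + -1) := by group
            rw [e]; exact memD1 _
          · have e : z⁻¹ * (x * z ^ b) = (z⁻¹ * x) * z ^ b := by group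
            rw [e, hzxi']
            have e2 : x * z * z ^ b = x * z ^ (b + 1) := by group
            rw [e2]; exact memD2 _
    have hXZtop : Subgroup.closure ({x, z} : Set G) = ⊤ := by
      rw [eq_top_iff, ← hgen, Subgroup.closure_le]
      intro w hw
      simp only [Set.mem_insert_iff, Set.mem_singleton_iff] at hw
      rcases hw with rfl | rfl | rfl
      · exact Subgroup.subset_closure (Set.mem_insert _ _)
      · rw [hy']
        exact mul_mem (Subgroup.subset_closure (Set.mem_insert _ _))
          (inv_mem (Subgroup.subset_closure (by simp)))
      · exact Subgroup.subset_closure (by simp)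
    have hsurj : Function.Surjective fD := fun w =>
      hTDrange (hclD (by rw [hXZtop]; exact Subgroup.mem_top w))
    have hle := Fintype.card_le_of_surjective fD hsurj
    rw [hcard] at hle
    simp only [Fintype.card_sum, Fintype.card_fin] at hle
    omega
  -- assembly
  refine ⟨x * (y * y), ?_, ?_, ?_⟩
  · intro k hc
    obtain ⟨c, hc⟩ := isConj_iff.mp hc
    apply hwwne
    have e : (x * (y * y)) * (x * (y * y)) = c * (x ^ k * x ^ k) * c⁻¹ := by
      rw [← hc]; group
    have e2 : x ^ k * x ^ k = 1 := by
      rw [← pow_add, show k + k = 2 * k by ring, pow_mul, hx2', one_pow]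
    rw [e, e2]
    group
  · intro k hc
    obtain ⟨c, hc⟩ := isConj_iff.mp hc
    apply hwK2
    rw [← hc]
    exact hK2norm.conj_mem _ (pow_mem hyK2 k) c
  · intro k hc
    obtain ⟨c, hc⟩ := isConj_iff.mp hc
    apply hwH1
    rw [← hc]
    exact hH1norm.conj_mem _ (pow_mem hzH1 k) c
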